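/- For every a > 0 and every real s > 1, the series Z_a(s) = Σ_{(m,n) ∈ ℤ²∖{(0,0)}} (4π³m²/a + 4πa·n²)^{−s} converges, and (s−1)·Z_a(s) → 1/(4π) as s → 1⁺ (the spectral zeta function of the flat torus of area 1 has a simple pole at s = 1 with residue 1/(4π)). -/

import Mathlib

open Real Filter Topology

section TorusZetaAux
open Real Filter Topology Set MeasureTheory

namespace TZ


noncomputable def Cs (s : ℝ) : ℝ := ∫ y in Ioi (0:ℝ), (1 + y^2) ^ (-s)

lemma tendsto_const_rpow {c : ℝ} (hc : 0 < c) (t : ℝ) :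
    Tendsto (fun s : ℝ => c ^ s) (𝓝 t) (𝓝 (c ^ t)) := by
  have : Continuous fun s : ℝ => c ^ s := by
    simp_rw [rpow_def_of_pos hc]
    exact Real.continuous_exp.comp (continuous_const.mul continuous_id)
  exact this.tendsto t

lemma cont_one_add_sq (s : ℝ) : Continuous fun y : ℝ => (1 + y^2) ^ (-s) := by
  apply Continuous.rpow_const (by continuity)
  intro x
  left
  positivity

lemma one_add_sq_le (s : ℝ) (hs : 1 ≤ s) (y : ℝ) : (1 + y^2) ^ (-s) ≤ (1 + y^2)⁻¹ := by
  rw [← rpow_neg_one]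
  exact rpow_le_rpow_of_exponent_le (by nlinarith [sq_nonneg y]) (by linarith)

lemma integrable_one_add_sq {s : ℝ} (hs : 1 ≤ s) :
    IntegrableOn (fun y : ℝ => (1 + y^2) ^ (-s)) (Ioi 0) := by
  apply Integrable.mono' (integrable_inv_one_add_sq.integrableOn)
    (cont_one_add_sq s).aestronglyMeasurable
  filter_upwards with y
  rw [Real.norm_eq_abs, abs_of_nonneg (rpow_nonneg (by positivity) _)]
  exact one_add_sq_le s hs y

lemma tendsto_Cs : Tendsto Cs (𝓝[>] (1:ℝ)) (𝓝 (π/2)) := by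
  have key : Tendsto (fun s : ℝ => ∫ y in Ioi (0:ℝ), (1 + y^2) ^ (-s))
      (𝓝[>] (1:ℝ)) (𝓝 (∫ y in Ioi (0:ℝ), (1 + y^2)⁻¹)) := by
    apply tendsto_integral_filter_of_dominated_convergence (fun y => (1 + y^2)⁻¹)
    · filter_upwards with s using (cont_one_add_sq s).aestronglyMeasurable
    · filter_upwards [self_mem_nhdsWithin] with s hs
      filter_upwards with y
      rw [Real.norm_eq_abs, abs_of_nonneg (rpow_nonneg (by positivity) _)]
      exact one_add_sq_le s (le_of_lt hs) y
    · exact integrable_inv_one_add_sq.integrableOn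
    · filter_upwards with y
      have h1 : (0:ℝ) < 1 + y^2 := by positivity
      have h2 : Tendsto (fun s : ℝ => (1 + y^2) ^ (-s)) (𝓝[>] (1:ℝ)) (𝓝 ((1+y^2) ^ (-(1:ℝ)))) :=
        ((tendsto_const_rpow h1 (-1)).comp (continuous_neg.tendsto 1)).mono_left
          nhdsWithin_le_nhds
      rwa [rpow_neg_one] at h2
  rw [show (∫ y in Ioi (0:ℝ), (1 + y^2)⁻¹) = π/2 by
    rw [integral_Ioi_inv_one_add_sq, arctan_zero, sub_zero]] at key
  exact key



-- generic antitone
lemma anti_aux {c d s : ℝ} (hc : 0 < c) (hd : 0 < d) (hs : 0 < s) :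
    AntitoneOn (fun y : ℝ => (c + d*y^2) ^ (-s)) (Ici 0) := by
  intro x hx y hy hxy
  apply rpow_le_rpow_of_nonpos (by positivity) _ (by linarith)
  have : x^2 ≤ y^2 := by nlinarith [mem_Ici.mp hx]
  nlinarith

lemma eval_aux {c d s : ℝ} (hc : 0 < c) (hd : 0 < d) (hs : 1 ≤ s) :
    IntegrableOn (fun y : ℝ => (c + d*y^2) ^ (-s)) (Ioi 0) ∧
    ∫ y in Ioi (0:ℝ), (c + d*y^2) ^ (-s)
      = c ^ (-s) * Real.sqrt (c/d) * ∫ y in Ioi (0:ℝ), (1 + y^2) ^ (-s) := by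
  set b : ℝ := Real.sqrt (d/c) with hb
  have hb0 : 0 < b := Real.sqrt_pos.mpr (by positivity)
  have hbsq : b^2 = d/c := Real.sq_sqrt (by positivity)
  have key : ∀ y : ℝ, (c + d*y^2) ^ (-s) = c ^ (-s) * (1 + (b*y)^2) ^ (-s) := by
    intro y
    rw [← Real.mul_rpow hc.le (by positivity)]
    congr 1
    field_simp [mul_pow, hbsq]
    rw [hbsq]; field_simp <;> ring
  have hint1 : IntegrableOn (fun y : ℝ => (1 + y^2) ^ (-s)) (Ioi 0) := by
    apply Integrable.mono' (integrable_inv_one_add_sq.integrableOn)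
    · apply Continuous.aestronglyMeasurable
      apply Continuous.rpow_const (by continuity)
      intro x; left; positivity
    · filter_upwards with y
      rw [Real.norm_eq_abs, abs_of_nonneg (rpow_nonneg (by positivity) _), ← rpow_neg_one]
      exact rpow_le_rpow_of_exponent_le (by nlinarith [sq_nonneg y]) (by linarith)
  have hcomp : IntegrableOn (fun y : ℝ => (1 + (b*y)^2) ^ (-s)) (Ioi 0) := by
    have := (integrableOn_Ioi_comp_mul_left_iff (fun y : ℝ => (1 + y^2) ^ (-s)) 0 hb0).mpr
    simp only [mul_zero] at this
    exact this hint1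
  constructor
  · simp_rw [key]
    exact hcomp.const_mul _
  · simp_rw [key]
    rw [MeasureTheory.integral_const_mul]
    have := MeasureTheory.integral_comp_mul_left_Ioi (fun y : ℝ => (1 + y^2) ^ (-s)) 0 hb0
    simp only [mul_zero, smul_eq_mul] at this
    rw [this]
    have hbinv : b⁻¹ = Real.sqrt (c/d) := by
      rw [hb, ← Real.sqrt_inv, inv_div]
    rw [hbinv]; ring

-- sum vs integral sandwich
lemma sandwich {g : ℝ → ℝ} (hmono : AntitoneOn g (Ici 0)) (hpos : ∀ x, 0 ≤ x → 0 ≤ g x)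
    (hint : IntegrableOn g (Ioi 0)) :
    Summable (fun n : ℕ => g ((n:ℝ)+1)) ∧
    (∑' n : ℕ, g ((n:ℝ)+1)) ≤ (∫ x in Ioi (0:ℝ), g x) ∧
    (∫ x in Ioi (0:ℝ), g x) ≤ g 0 + ∑' n : ℕ, g ((n:ℝ)+1) := by
  have gpos : ∀ᵐ x ∂(volume.restrict (Ioi (0:ℝ))), 0 ≤ g x := by
    filter_upwards [ae_restrict_mem measurableSet_Ioi] with x hx
    exact hpos x (le_of_lt hx)
  have partial_le : ∀ N : ℕ, (∑ i ∈ Finset.range N, g ((i:ℝ)+1)) ≤ ∫ x in Ioi (0:ℝ), g x := by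
    intro N
    have h1 : AntitoneOn g (Icc 0 (0 + (N:ℝ))) := hmono.mono (fun x hx => hx.1)
    have h2 := h1.sum_le_integral
    simp only [zero_add, Nat.cast_add, Nat.cast_one] at h2
    calc (∑ i ∈ Finset.range N, g ((i:ℝ)+1)) ≤ ∫ x in (0:ℝ)..(N:ℝ), g x := h2
      _ ≤ ∫ x in Ioi (0:ℝ), g x := by
          rw [intervalIntegral.integral_of_le (by positivity)]
          apply setIntegral_mono_set hint gpos
          filter_upwards with x hx using hx.1
  have hsummable : Summable (fun n : ℕ => g ((n:ℝ)+1)) :=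
    summable_of_sum_range_le (fun n => hpos _ (by positivity)) partial_le
  refine ⟨hsummable, Real.tsum_le_of_sum_range_le (fun n => hpos _ (by positivity)) partial_le, ?_⟩
  -- lower bound
  have hsplit : (∫ x in Ioi (0:ℝ), g x)
      = (∫ x in Ioc (0:ℝ) 1, g x) + ∫ x in Ioi (1:ℝ), g x := by
    rw [← setIntegral_union (Ioc_disjoint_Ioi le_rfl) measurableSet_Ioi
      (hint.mono_set Ioc_subset_Ioi_self) (hint.mono_set (Ioi_subset_Ioi zero_le_one)),
      Ioc_union_Ioi_eq_Ioi zero_le_one]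
  have h01 : (∫ x in Ioc (0:ℝ) 1, g x) ≤ g 0 := by
    have h1 : AntitoneOn g (Icc 0 (0 + ((1:ℕ):ℝ))) := hmono.mono (fun x hx => hx.1)
    have h2 := h1.integral_le_sum
    simp only [Nat.cast_one, zero_add, Finset.range_one, Finset.sum_singleton,
      Nat.cast_zero, add_zero] at h2
    rwa [intervalIntegral.integral_of_le zero_le_one] at h2
  have h1inf : (∫ x in Ioi (1:ℝ), g x) ≤ ∑' n : ℕ, g ((n:ℝ)+1) := by
    have hti : Tendsto (fun N : ℕ => ∫ x in (1:ℝ)..(1+(N:ℝ)), g x) atTop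
        (𝓝 (∫ x in Ioi (1:ℝ), g x)) :=
      intervalIntegral_tendsto_integral_Ioi 1 (hint.mono_set (Ioi_subset_Ioi zero_le_one))
        (tendsto_atTop_add_const_left atTop 1 tendsto_natCast_atTop_atTop)
    apply le_of_tendsto hti
    filter_upwards with N
    have h1 : AntitoneOn g (Icc 1 (1 + (N:ℝ))) :=
      hmono.mono (fun x hx => le_trans zero_le_one hx.1)
    calc (∫ x in (1:ℝ)..(1+(N:ℝ)), g x) ≤ ∑ i ∈ Finset.range N, g (1+(i:ℝ)) :=
          h1.integral_le_sum
      _ = ∑ i ∈ Finset.range N, g ((i:ℝ)+1) := by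
          apply Finset.sum_congr rfl; intros; rw [add_comm]
      _ ≤ ∑' n : ℕ, g ((n:ℝ)+1) :=
          Summable.sum_le_tsum _ (fun i _ => hpos _ (by positivity)) hsummable
  linarith



noncomputable def Ee (t : ℝ) : ℝ := ∑' n : ℕ, ((n:ℝ)+1) ^ (-t)

lemma summable_Ee {t : ℝ} (ht : 1 < t) : Summable (fun n : ℕ => ((n:ℝ)+1) ^ (-t)) := by
  have h := Real.summable_nat_rpow.mpr (show -t < -1 by linarith)
  have := (summable_nat_add_iff (f := fun n : ℕ => (n:ℝ) ^ (-t)) 1).mpr h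
  apply this.congr
  intro n
  push_cast
  norm_num

lemma Ee_nonneg (t : ℝ) : 0 ≤ Ee t := tsum_nonneg (fun n => rpow_nonneg (by positivity) _)

lemma Ee_le_Ee {t : ℝ} (ht : 2 ≤ t) : Ee t ≤ Ee 2 := by
  apply Summable.tsum_le_tsum _ (summable_Ee (by linarith)) (summable_Ee one_lt_two)
  intro n
  have : (0:ℝ) ≤ (n:ℝ) := Nat.cast_nonneg n
  exact rpow_le_rpow_of_exponent_le (by linarith) (by linarith)

lemma Ee_eq {t : ℝ} (ht : 1 < t) : Ee t = ∑' n : ℕ, 1 / (n:ℝ) ^ t := by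
  have hsum : Summable (fun n : ℕ => 1 / (n:ℝ) ^ t) :=
    Real.summable_one_div_nat_rpow.mpr ht
  rw [Summable.tsum_eq_zero_add hsum]
  simp only [Nat.cast_zero, Real.zero_rpow (show t ≠ 0 by linarith), div_zero, zero_add]
  unfold Ee
  apply tsum_congr
  intro n
  rw [Real.rpow_neg (by positivity), one_div]
  push_cast
  ring_nf

/-- Residue: `(s-1) * Ee (2s-1) → 1/2` as `s → 1⁺`. -/
lemma residue_Ee : Tendsto (fun s : ℝ => (s - 1) * Ee (2*s - 1)) (𝓝[>] (1:ℝ)) (𝓝 (1/2)) := by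
  have hmap : Tendsto (fun s : ℝ => 2*s - 1) (𝓝[>] (1:ℝ)) (𝓝[>] (1:ℝ)) := by
    refine tendsto_nhdsWithin_of_tendsto_nhds_of_eventually_within _ ?_ ?_
    · have h : Tendsto (fun s : ℝ => 2*s - 1) (𝓝 (1:ℝ)) (𝓝 (2*1 - 1)) :=
        ((continuous_const.mul continuous_id).sub continuous_const).tendsto 1
      norm_num at h
      exact h.mono_left nhdsWithin_le_nhds
    · filter_upwards [eventually_mem_nhdsWithin] with s hs
      simp only [mem_Ioi] at hs ⊢
      linarith
  have h := tendsto_sub_mul_tsum_nat_rpow.comp hmap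
  have h2 : Tendsto (fun s : ℝ => (2*s - 2) * Ee (2*s - 1)) (𝓝[>] (1:ℝ)) (𝓝 1) := by
    apply h.congr'
    filter_upwards [self_mem_nhdsWithin] with s hs
    simp only [Function.comp_apply]
    rw [Ee_eq (by simp only [mem_Ioi] at hs; linarith)]
    simp only [one_div]
    ring_nf
  have h3 := h2.const_mul (1/2 : ℝ)
  simp only [mul_one] at h3
  apply h3.congr
  intro s
  ring

end TZ

namespace TZ

noncomputable def Ks (c1 c2 s : ℝ) : ℝ := c1 ^ (-s) * Real.sqrt (c1/c2) * Cs s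

noncomputable def S1 (c1 c2 s : ℝ) : ℝ :=
  ∑' (m : ℕ) (n : ℕ), (c1*((m:ℝ)+1)^2 + c2*((n:ℝ)+1)^2) ^ (-s)

lemma Cs_nonneg (s : ℝ) : 0 ≤ Cs s :=
  setIntegral_nonneg measurableSet_Ioi (fun y _ => rpow_nonneg (by positivity) _)

lemma sq_rpow {x : ℝ} (hx : 0 < x) (s : ℝ) : (x^2) ^ (-s) = x ^ (-(2*s)) := by
  rw [show (x^2 : ℝ) = x ^ ((2:ℕ):ℝ) by rw [Real.rpow_natCast], ← Real.rpow_mul hx.le]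
  norm_num

lemma inner_bounds {c1 c2 s : ℝ} (hc1 : 0 < c1) (hc2 : 0 < c2) (hs : 1 < s) (m : ℕ) :
    Summable (fun n : ℕ => (c1*((m:ℝ)+1)^2 + c2*((n:ℝ)+1)^2) ^ (-s)) ∧
    (∑' n : ℕ, (c1*((m:ℝ)+1)^2 + c2*((n:ℝ)+1)^2) ^ (-s))
      ≤ Ks c1 c2 s * ((m:ℝ)+1) ^ (-(2*s-1)) ∧
    Ks c1 c2 s * ((m:ℝ)+1) ^ (-(2*s-1)) - c1^(-s) * ((m:ℝ)+1) ^ (-(2*s))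
      ≤ ∑' n : ℕ, (c1*((m:ℝ)+1)^2 + c2*((n:ℝ)+1)^2) ^ (-s) := by
  set x : ℝ := (m:ℝ)+1 with hxdef
  have hx : 0 < x := by positivity
  set g : ℝ → ℝ := fun y => (c1*x^2 + c2*y^2) ^ (-s) with hg
  have hc : 0 < c1*x^2 := by positivity
  have hanti : AntitoneOn g (Ici 0) := anti_aux hc hc2 (by linarith)
  have hnn : ∀ y : ℝ, 0 ≤ y → 0 ≤ g y := fun y _ => rpow_nonneg (by positivity) _
  obtain ⟨hint, heval⟩ := eval_aux hc hc2 (le_of_lt hs)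
  obtain ⟨hsum, hub, hlb⟩ := sandwich hanti hnn hint
  -- evaluate the integral
  have hIeq : (∫ y in Ioi (0:ℝ), (c1*x^2 + c2*y^2) ^ (-s)) = Ks c1 c2 s * x ^ (-(2*s-1)) := by
    rw [heval]
    have h1 : (c1*x^2) ^ (-s) = c1^(-s) * x ^ (-(2*s)) := by
      rw [Real.mul_rpow hc1.le (by positivity), sq_rpow hx]
    have h2 : Real.sqrt (c1*x^2/c2) = Real.sqrt (c1/c2) * x := by
      rw [show c1*x^2/c2 = (c1/c2)*x^2 by ring, Real.sqrt_mul (by positivity),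
        Real.sqrt_sq hx.le]
    rw [h1, h2, show x ^ (-(2*s-1)) = x ^ (-(2*s)) * x by
      rw [show -(2*s-1) = -(2*s) + 1 by ring, Real.rpow_add_one hx.ne']]
    unfold Ks Cs
    ring
  have hg0 : (c1*x^2 + c2*(0:ℝ)^2) ^ (-s) = c1^(-s) * x ^ (-(2*s)) := by
    rw [show c1*x^2 + c2*(0:ℝ)^2 = c1*x^2 by ring, Real.mul_rpow hc1.le (by positivity),
      sq_rpow hx]
  simp only [hg] at hsum hub hlb
  refine ⟨hsum, hub.trans (le_of_eq hIeq), ?_⟩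
  rw [hIeq] at hlb
  rw [hg0] at hlb
  linarith

lemma S1_bounds {c1 c2 s : ℝ} (hc1 : 0 < c1) (hc2 : 0 < c2) (hs : 1 < s) :
    Summable (fun m : ℕ => ∑' n : ℕ, (c1*((m:ℝ)+1)^2 + c2*((n:ℝ)+1)^2) ^ (-s)) ∧
    S1 c1 c2 s ≤ Ks c1 c2 s * Ee (2*s-1) ∧
    Ks c1 c2 s * Ee (2*s-1) - c1^(-s) * Ee (2*s) ≤ S1 c1 c2 s := by
  have h2s1 : (1:ℝ) < 2*s-1 := by linarith
  have hKnn : 0 ≤ Ks c1 c2 s :=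
    mul_nonneg (mul_nonneg (rpow_nonneg hc1.le _) (Real.sqrt_nonneg _)) (Cs_nonneg s)
  have hEsum1 : Summable (fun m : ℕ => Ks c1 c2 s * ((m:ℝ)+1) ^ (-(2*s-1))) :=
    (summable_Ee h2s1).mul_left _
  have hEsum2 : Summable (fun m : ℕ => c1^(-s) * ((m:ℝ)+1) ^ (-(2*s))) :=
    (summable_Ee (by linarith)).mul_left _
  have hTsum : Summable (fun m : ℕ =>
      ∑' n : ℕ, (c1*((m:ℝ)+1)^2 + c2*((n:ℝ)+1)^2) ^ (-s)) := by
    apply Summable.of_nonneg_of_le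
      (fun m => tsum_nonneg fun n => rpow_nonneg (by positivity) _)
      (fun m => (inner_bounds hc1 hc2 hs m).2.1) hEsum1
  refine ⟨hTsum, ?_, ?_⟩
  · unfold S1
    calc (∑' m : ℕ, ∑' n : ℕ, (c1*((m:ℝ)+1)^2 + c2*((n:ℝ)+1)^2) ^ (-s))
        ≤ ∑' m : ℕ, Ks c1 c2 s * ((m:ℝ)+1) ^ (-(2*s-1)) :=
          Summable.tsum_le_tsum (fun m => (inner_bounds hc1 hc2 hs m).2.1) hTsum hEsum1
      _ = Ks c1 c2 s * Ee (2*s-1) := by rw [tsum_mul_left]; rfl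
  · unfold S1
    have h := Summable.tsum_le_tsum (fun m => (inner_bounds hc1 hc2 hs m).2.2)
      (hEsum1.sub hEsum2) hTsum
    calc Ks c1 c2 s * Ee (2*s-1) - c1^(-s) * Ee (2*s)
        = ∑' m : ℕ, (Ks c1 c2 s * ((m:ℝ)+1) ^ (-(2*s-1))
            - c1^(-s) * ((m:ℝ)+1) ^ (-(2*s))) := by
          rw [Summable.tsum_sub hEsum1 hEsum2, tsum_mul_left, tsum_mul_left]; rfl
      _ ≤ _ := h

lemma tendsto_Ks {c1 c2 : ℝ} (hc1 : 0 < c1) (hc2 : 0 < c2) :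
    Tendsto (fun s => Ks c1 c2 s) (𝓝[>] (1:ℝ))
      (𝓝 (c1⁻¹ * Real.sqrt (c1/c2) * (π/2))) := by
  have h1 : Tendsto (fun s : ℝ => c1 ^ (-s)) (𝓝[>] (1:ℝ)) (𝓝 (c1 ^ (-(1:ℝ)))) :=
    ((tendsto_const_rpow hc1 (-1)).comp (continuous_neg.tendsto 1)).mono_left
      nhdsWithin_le_nhds
  rw [rpow_neg_one] at h1
  exact (h1.mul_const _).mul tendsto_Cs

lemma tendsto_err {c1 : ℝ} (hc1 : 0 < c1) :
    Tendsto (fun s : ℝ => (s-1) * (c1^(-s) * Ee (2*s))) (𝓝[>] (1:ℝ)) (𝓝 0) := by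
  have h1 : Tendsto (fun s : ℝ => c1 ^ (-s)) (𝓝[>] (1:ℝ)) (𝓝 (c1 ^ (-(1:ℝ)))) :=
    ((tendsto_const_rpow hc1 (-1)).comp (continuous_neg.tendsto 1)).mono_left
      nhdsWithin_le_nhds
  have hmaj : Tendsto (fun s : ℝ => (s-1) * c1^(-s) * Ee 2) (𝓝[>] (1:ℝ)) (𝓝 0) := by
    have hs1 : Tendsto (fun s : ℝ => s - 1) (𝓝[>] (1:ℝ)) (𝓝 0) := by
      have h : Tendsto (fun s : ℝ => s - 1) (𝓝 (1:ℝ)) (𝓝 (1-1)) :=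
        (continuous_id.sub continuous_const).tendsto 1
      norm_num at h
      exact h.mono_left nhdsWithin_le_nhds
    have := (hs1.mul h1).mul_const (Ee 2)
    simpa using this
  apply squeeze_zero_norm' _ hmaj
  filter_upwards [eventually_mem_nhdsWithin] with s hs
  simp only [mem_Ioi] at hs
  have h1s : (0:ℝ) ≤ s - 1 := by linarith
  have hE2 : Ee (2*s) ≤ Ee 2 := Ee_le_Ee (by linarith)
  have hEnn : 0 ≤ Ee (2*s) := Ee_nonneg _
  rw [Real.norm_eq_abs, abs_of_nonneg (by positivity)]
  have : (0:ℝ) ≤ c1 ^ (-s) := rpow_nonneg hc1.le _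
  calc (s-1) * (c1^(-s) * Ee (2*s)) ≤ (s-1) * (c1^(-s) * Ee 2) := by
        apply mul_le_mul_of_nonneg_left _ h1s
        exact mul_le_mul_of_nonneg_left hE2 this
    _ = (s-1) * c1^(-s) * Ee 2 := by ring

lemma residue_S1 {c1 c2 : ℝ} (hc1 : 0 < c1) (hc2 : 0 < c2) :
    Tendsto (fun s : ℝ => (s-1) * S1 c1 c2 s) (𝓝[>] (1:ℝ))
      (𝓝 (c1⁻¹ * Real.sqrt (c1/c2) * (π/2) * (1/2))) := by
  have hupper : Tendsto (fun s : ℝ => Ks c1 c2 s * ((s-1) * Ee (2*s-1))) (𝓝[>] (1:ℝ))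
      (𝓝 (c1⁻¹ * Real.sqrt (c1/c2) * (π/2) * (1/2))) :=
    (tendsto_Ks hc1 hc2).mul residue_Ee
  have hlower : Tendsto (fun s : ℝ =>
      Ks c1 c2 s * ((s-1) * Ee (2*s-1)) - (s-1) * (c1^(-s) * Ee (2*s))) (𝓝[>] (1:ℝ))
      (𝓝 (c1⁻¹ * Real.sqrt (c1/c2) * (π/2) * (1/2))) := by
    have := hupper.sub (tendsto_err hc1)
    simpa using this
  apply tendsto_of_tendsto_of_tendsto_of_le_of_le' hlower hupper
  · filter_upwards [eventually_mem_nhdsWithin] with s hs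
    simp only [mem_Ioi] at hs
    have h1s : (0:ℝ) ≤ s - 1 := by linarith
    have := (S1_bounds hc1 hc2 hs).2.2
    nlinarith [this]
  · filter_upwards [eventually_mem_nhdsWithin] with s hs
    simp only [mem_Ioi] at hs
    have h1s : (0:ℝ) ≤ s - 1 := by linarith
    have := (S1_bounds hc1 hc2 hs).2.1
    nlinarith [this]

end TZ

namespace TZ

noncomputable def fq (c1 c2 s : ℝ) (p : ℤ × ℤ) : ℝ :=
  (c1*(p.1:ℝ)^2 + c2*(p.2:ℝ)^2) ^ (-s)

lemma fq_nonneg {c1 c2 : ℝ} (hc1 : 0 < c1) (hc2 : 0 < c2) (s : ℝ) (p : ℤ × ℤ) :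
    0 ≤ fq c1 c2 s p :=
  rpow_nonneg (by positivity) _

lemma summable_fq {c1 c2 s : ℝ} (hc1 : 0 < c1) (hc2 : 0 < c2) (hs : 1 < s) :
    Summable (fq c1 c2 s) := by
  have hmin : 0 < min c1 c2 := lt_min hc1 hc2
  have hbig : Summable (fun x : Fin 2 → ℤ => (min c1 c2)^(-s) * ‖x‖ ^ (-(2*s))) :=
    (EisensteinSeries.summable_one_div_norm_rpow (by linarith)).mul_left _
  have hcomp : Summable (fun p : ℤ × ℤ =>
      (min c1 c2)^(-s) * ‖(finTwoArrowEquiv ℤ).symm p‖ ^ (-(2*s))) :=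
    hbig.comp_injective (Equiv.injective _)
  apply Summable.of_nonneg_of_le (fun p => fq_nonneg hc1 hc2 s p) _ hcomp
  intro p
  have hnorm : ‖(finTwoArrowEquiv ℤ).symm p‖ = ((max p.1.natAbs p.2.natAbs : ℕ) : ℝ) := by
    rw [EisensteinSeries.norm_eq_max_natAbs]
    simp [finTwoArrowEquiv]
  rw [hnorm]
  by_cases hp : p = 0
  · rw [hp]
    unfold fq
    simp only [Prod.fst_zero, Prod.snd_zero, Int.cast_zero]
    rw [show c1*(0:ℝ)^2 + c2*(0:ℝ)^2 = 0 by ring,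
      Real.zero_rpow (by intro h; simp only [neg_eq_zero] at h; linarith)]
    exact mul_nonneg (rpow_nonneg hmin.le _) (rpow_nonneg (Nat.cast_nonneg _) _)
  · set M : ℕ := max p.1.natAbs p.2.natAbs with hM
    have hM1 : 1 ≤ M := by
      by_contra h
      push_neg at h
      interval_cases M
      · apply hp
        have h1 : p.1.natAbs = 0 := by omega
        have h2 : p.2.natAbs = 0 := by omega
        have := Int.natAbs_eq_zero.mp h1
        have := Int.natAbs_eq_zero.mp h2
        exact Prod.ext ‹p.1 = 0› ‹p.2 = 0›
    have hMpos : (0:ℝ) < (M:ℝ) := by exact_mod_cast Nat.pos_of_ne_zero (by omega)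
    have hM2 : ((M:ℝ))^2 ≤ (p.1:ℝ)^2 + (p.2:ℝ)^2 := by
      have e1 : ((p.1.natAbs : ℕ) : ℝ)^2 = (p.1:ℝ)^2 := by
        rw [Nat.cast_natAbs, Int.cast_abs, sq_abs]
      have e2 : ((p.2.natAbs : ℕ) : ℝ)^2 = (p.2:ℝ)^2 := by
        rw [Nat.cast_natAbs, Int.cast_abs, sq_abs]
      rcases max_choice p.1.natAbs p.2.natAbs with h | h <;> rw [hM, h]
      · nlinarith [sq_nonneg (p.2:ℝ)]
      · nlinarith [sq_nonneg (p.1:ℝ)]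
    have hq : min c1 c2 * ((M:ℝ))^2 ≤ c1*(p.1:ℝ)^2 + c2*(p.2:ℝ)^2 := by
      have b1 : min c1 c2 ≤ c1 := min_le_left _ _
      have b2 : min c1 c2 ≤ c2 := min_le_right _ _
      nlinarith [sq_nonneg (p.1:ℝ), sq_nonneg (p.2:ℝ)]
    calc fq c1 c2 s p ≤ (min c1 c2 * ((M:ℝ))^2) ^ (-s) :=
          rpow_le_rpow_of_nonpos (by positivity) hq (by linarith)
      _ = (min c1 c2)^(-s) * ((M:ℝ))^(-(2*s)) := by
          rw [Real.mul_rpow hmin.le (by positivity), sq_rpow hMpos]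

lemma zsplit {g : ℤ → ℝ} (hgeven : ∀ k : ℤ, g (-k) = g k) (hgsum : Summable g) :
    (∑' n : ℤ, g n) = g 0 + 2 * ∑' n : ℕ, g ((n:ℤ)+1) := by
  have h1 : Summable (fun n : ℕ => g ↑n) := hgsum.comp_injective (fun a b h => by exact_mod_cast h)
  have h2 : Summable (fun n : ℕ => g (-(↑n+1))) := by
    apply hgsum.comp_injective
    intro a b h
    simp only [neg_inj, add_left_inj, Nat.cast_inj] at h
    exact h
  rw [tsum_of_nat_of_neg_add_one h1 h2, Summable.tsum_eq_zero_add h1]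
  have e1 : (∑' n : ℕ, g (-(↑n+1))) = ∑' n : ℕ, g ((n:ℤ)+1) := tsum_congr fun n => hgeven _
  have e2 : (∑' n : ℕ, g (↑(n+1))) = ∑' n : ℕ, g ((n:ℤ)+1) := by
    apply tsum_congr
    intro n
    norm_num
  rw [e1, e2, Nat.cast_zero]
  ring

lemma decomp {c1 c2 s : ℝ} (hc1 : 0 < c1) (hc2 : 0 < c2) (hs : 1 < s) :
    (∑' p : {p : ℤ × ℤ // p ≠ 0}, fq c1 c2 s p.1)
      = 4 * S1 c1 c2 s + 2 * (c1^(-s) * Ee (2*s)) + 2 * (c2^(-s) * Ee (2*s)) := by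
  set f := fq c1 c2 s with hfdef
  have hsum : Summable f := summable_fq hc1 hc2 hs
  have hsne : -s ≠ 0 := by intro h; simp only [neg_eq_zero] at h; linarith
  have hf0 : f 0 = 0 := by
    unfold f
    unfold fq
    simp only [Prod.fst_zero, Prod.snd_zero, Int.cast_zero]
    rw [show c1*(0:ℝ)^2 + c2*(0:ℝ)^2 = 0 by ring, Real.zero_rpow hsne]
  have heven2 : ∀ (m k : ℤ), f (m, -k) = f (m, k) := by
    intro m k
    unfold f
    unfold fq
    push_cast
    ring_nf
  have heven1 : ∀ (m k : ℤ), f (-m, k) = f (m, k) := by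
    intro m k
    unfold f
    unfold fq
    push_cast
    ring_nf
  have hsub : (∑' p : {p : ℤ × ℤ // p ≠ 0}, f p.1) = ∑' p : ℤ × ℤ, f p := by
    refine Eq.trans (tsum_subtype {p : ℤ × ℤ | p ≠ 0} f) (tsum_congr fun p => ?_)
    by_cases hp : p = 0
    · rw [hp, Set.indicator_of_notMem (by simp), hf0]
    · rw [Set.indicator_of_mem (by simpa using hp)]
  have hslice : ∀ m : ℤ, (∑' n : ℤ, f (m, n)) = f (m, 0) + 2 * ∑' n : ℕ, f (m, (n:ℤ)+1) :=
    fun m => zsplit (fun k => heven2 m k) (hsum.prod_factor m)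
  have hsum0 : Summable (fun m : ℤ => f (m, 0)) := by
    apply hsum.comp_injective
    intro a b h
    exact (Prod.ext_iff.mp h).1
  have hG : Summable (fun m : ℤ => ∑' n : ℤ, f (m, n)) :=
    ((summable_prod_of_nonneg (fun p => fq_nonneg hc1 hc2 s p)).mp hsum).2
  have hT : Summable (fun m : ℤ => ∑' n : ℕ, f (m, (n:ℤ)+1)) := by
    have e : (fun m : ℤ => ∑' n : ℕ, f (m, (n:ℤ)+1))
        = fun m => ((∑' n : ℤ, f (m, n)) - f (m, 0)) * 2⁻¹ := by
      funext m
      rw [hslice m]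
      ring
    rw [e]
    exact (hG.sub hsum0).mul_right _
  rw [hsub, Summable.tsum_prod' hsum (fun m => hsum.prod_factor m), tsum_congr hslice,
    Summable.tsum_add hsum0 (hT.mul_left 2), tsum_mul_left]
  have e1 : (∑' m : ℤ, f (m, 0)) = 2 * (c1^(-s) * Ee (2*s)) := by
    rw [zsplit (fun k => heven1 k 0) hsum0]
    have h00 : f (0, 0) = 0 := hf0
    rw [h00]
    have et : ∀ m : ℕ, f ((m:ℤ)+1, 0) = c1^(-s) * ((m:ℝ)+1)^(-(2*s)) := by
      intro m
      unfold f
      unfold fq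
      have : (c1*((((m:ℤ)+1 : ℤ)):ℝ)^2 + c2*((0:ℤ):ℝ)^2) = c1*((m:ℝ)+1)^2 := by
        push_cast
        ring
      rw [this, Real.mul_rpow hc1.le (by positivity), sq_rpow (by positivity)]
    rw [tsum_congr et, tsum_mul_left]
    unfold Ee
    ring
  have e2 : (∑' m : ℤ, ∑' n : ℕ, f (m, (n:ℤ)+1))
      = (c2^(-s) * Ee (2*s)) + 2 * S1 c1 c2 s := by
    rw [zsplit (g := fun m : ℤ => ∑' n : ℕ, f (m, (n:ℤ)+1))
      (fun k => tsum_congr (fun n : ℕ => heven1 k ((n:ℤ)+1))) hT]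
    have eT0 : (∑' n : ℕ, f ((0:ℤ), (n:ℤ)+1)) = c2^(-s) * Ee (2*s) := by
      have et : ∀ n : ℕ, f ((0:ℤ), (n:ℤ)+1) = c2^(-s) * ((n:ℝ)+1)^(-(2*s)) := by
        intro n
        unfold f
        unfold fq
        have : (c1*((0:ℤ):ℝ)^2 + c2*((((n:ℤ)+1 : ℤ)):ℝ)^2) = c2*((n:ℝ)+1)^2 := by
          push_cast
          ring
        rw [this, Real.mul_rpow hc2.le (by positivity), sq_rpow (by positivity)]
      rw [tsum_congr et, tsum_mul_left]
      unfold Ee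
      rfl
    have eS : (∑' m : ℕ, ∑' n : ℕ, f ((m:ℤ)+1, (n:ℤ)+1)) = S1 c1 c2 s := by
      unfold S1
      apply tsum_congr
      intro m
      apply tsum_congr
      intro n
      unfold f
      unfold fq
      congr 1
      push_cast
      ring
    rw [eT0, eS]
  rw [e1, e2]
  ring

end TZ

end TorusZetaAux

open TZ

/-- The eigenvalues `λ_{m,n} = 4π³m²/a + 4πa n²` of the positive Laplacian on the flat
rectangular torus `[−a,a] × [0,2π]` with metric `(1/(4πa)) g_{Eucl}` of area 1. -/
noncomputable def lam (a : ℝ) (p : ℤ × ℤ) : ℝ :=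
  4 * π ^ 3 * (p.1 : ℝ) ^ 2 / a + 4 * π * a * (p.2 : ℝ) ^ 2

/-- The spectral zeta function `Z_a(s) = Σ_{(m,n) ≠ (0,0)} λ_{m,n}^{−s}`. -/
noncomputable def Za (a s : ℝ) : ℝ :=
  ∑' p : {p : ℤ × ℤ // p ≠ 0}, lam a p.1 ^ (-s)

/-- For every `a > 0` and real `s > 1` the spectral zeta series of the flat torus of area 1
converges, and `(s−1)·Z_a(s) → 1/(4π)` as `s → 1⁺`: the zeta function has a simple pole at
`s = 1` with residue `1/(4π)`. -/
theorem torus_zeta_pole (a : ℝ) (ha : 0 < a) :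
    (∀ s : ℝ, 1 < s → Summable (fun p : {p : ℤ × ℤ // p ≠ 0} => lam a p.1 ^ (-s))) ∧
      Tendsto (fun s : ℝ => (s - 1) * Za a s) (𝓝[>] 1) (𝓝 (1 / (4 * π))) := by
  have hπ : 0 < π := Real.pi_pos
  have hc1 : 0 < 4*π^3/a := by positivity
  have hc2 : 0 < 4*π*a := by positivity
  have hlamfq : ∀ (s : ℝ) (p : ℤ × ℤ), lam a p ^ (-s) = fq (4*π^3/a) (4*π*a) s p := by
    intro s p
    unfold lam fq
    congr 1
    ring
  constructor
  · intro s hs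
    have h := (summable_fq hc1 hc2 hs).subtype {p : ℤ × ℤ | p ≠ 0}
    exact h.congr (fun p => (hlamfq s p.1).symm)
  · have hsqrt : Real.sqrt ((4*π^3/a) / (4*π*a)) = π/a := by
      rw [show (4*π^3/a) / (4*π*a) = (π/a)^2 by field_simp]
      exact Real.sqrt_sq (by positivity)
    have h1 := residue_S1 hc1 hc2
    have h2 := tendsto_err (c1 := 4*π^3/a) hc1
    have h3 := tendsto_err (c1 := 4*π*a) hc2
    have hcomb := ((h1.const_mul 4).add (h2.const_mul 2)).add (h3.const_mul 2)
    have hval : 4 * ((4*π^3/a)⁻¹ * Real.sqrt ((4*π^3/a) / (4*π*a)) * (π/2) * (1/2))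
        + 2*0 + 2*0 = 1/(4*π) := by
      rw [hsqrt]
      field_simp
      ring
    rw [hval] at hcomb
    apply hcomb.congr'
    filter_upwards [eventually_mem_nhdsWithin] with s hs
    simp only [Set.mem_Ioi] at hs
    have hZa : Za a s = 4 * S1 (4*π^3/a) (4*π*a) s
        + 2 * ((4*π^3/a)^(-s) * Ee (2*s)) + 2 * ((4*π*a)^(-s) * Ee (2*s)) := by
      rw [← decomp hc1 hc2 hs]
      unfold Za
      exact tsum_congr (fun p => hlamfq s p.1)
    rw [hZa]
    ring
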